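/- arXiv:2301.05409 — 2 statements merged into one kernel-verified Lean document; each statement's English description precedes it below -/
import Mathlib

section
/- Let R be a commutative ring, s a ring automorphism of R with s∘s = id, and A = R^s its fixed subring; assume there exists x ∈ R with s(x) = −x such that {1, x} is a basis of R as an A-module. Let B = R ⊗_A R, regarded as an R-bimodule via the outer factors. Then there exist R-bimodule homomorphisms u : R → B ⊗_R B and c : B ⊗_R B → R such that, under the identifications B ≅ R ⊗_R B and B ≅ B ⊗_R R, the compositions (id_B ⊗ c)∘(u ⊗ id_B) : B → B and (c ⊗ id_B)∘(id_B ⊗ u) : B → B both equal the identity of B. Explicitly, writing B ⊗_R B ≅ R ⊗_A R ⊗_A R, one may take c(r ⊗ r′ ⊗ r″) = r·ε(r′)·r″, where ε(a + xb) = b for a, b ∈ A, and u the bimodule map with u(1) = x⊗1⊗1 + 1⊗1⊗x. -/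
/-!
Unit and counit for the Soergel bimodule `B = R ⊗_A R`, where `A = R^s` is the fixed subring of
an involution `s` of a commutative ring `R` and `R = A ⊕ xA` for an element `x` with `s x = -x`.
There are `R`-bimodule maps `u : R → B ⊗_R B` and `c : B ⊗_R B → R` (with `B ⊗_R B` identified
with `R ⊗_A R ⊗_A R`, the bimodule structures being via the outer factors) satisfying the
zig-zag identities `(id_B ⊗ c) ∘ (u ⊗ id_B) = id_B` and `(c ⊗ id_B) ∘ (id_B ⊗ u) = id_B`
(expressed on pure tensors under the identifications `B ≅ R ⊗_R B` and `B ≅ B ⊗_R R`);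
explicitly one may take `c (r ⊗ r' ⊗ r'') = r · ε(r') · r''` with `ε(a + xb) = b`, and `u` the
bimodule map with `u 1 = x ⊗ 1 ⊗ 1 + 1 ⊗ 1 ⊗ x`.
-/

open scoped TensorProduct

set_option synthInstance.maxHeartbeats 1000000
set_option maxHeartbeats 2000000

noncomputable section

variable (R : Type) [CommRing R] (s : R →+* R)

/-- The fixed subring `A = R^s` of the involution `s`. -/
def fixedSubring : Subring R := RingHom.eqLocus s (RingHom.id R)

local notation "A" => fixedSubring R s

/-- The Soergel bimodule `B = R ⊗_A R`. -/
abbrev SoergelB : Type := R ⊗[A] R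

/-- The triple tensor product `R ⊗_A R ⊗_A R`, identified with `B ⊗_R B`. -/
abbrev SoergelBB : Type := R ⊗[A] (R ⊗[A] R)

/-- Inclusion of `R` into `B = R ⊗_A R` as the left factor (left `R`-action). -/
def inclBLeft : R →ₐ[A] SoergelB R s := Algebra.TensorProduct.includeLeft

/-- Inclusion of `R` into `B = R ⊗_A R` as the right factor (right `R`-action). -/
def inclBRight : R →ₐ[A] SoergelB R s := Algebra.TensorProduct.includeRight

/-- Inclusion of `R` into `R ⊗_A R ⊗_A R` as the first factor (left `R`-action). -/
def inclTLeft : R →ₐ[A] SoergelBB R s := Algebra.TensorProduct.includeLeft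

/-- Inclusion of `R` into `R ⊗_A R ⊗_A R` as the last factor (right `R`-action). -/
def inclTRight : R →ₐ[A] SoergelBB R s :=
  (Algebra.TensorProduct.includeRight).comp Algebra.TensorProduct.includeRight

set_option maxHeartbeats 16000000 in
/-- **Unit and counit for the Soergel bimodule.**  There exist additive maps
`u : R → B ⊗_R B` and `c : B ⊗_R B → R` which are `R`-bimodule homomorphisms and satisfy the
zig-zag identities, with `c (r ⊗ (a + xb) ⊗ r'') = r·b·r''` and
`u 1 = x ⊗ 1 ⊗ 1 + 1 ⊗ 1 ⊗ x`. -/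
theorem soergel_unit_counit
    (hs : ∀ r : R, s (s r) = r) (x : R) (hx : s x = -x)
    (hbasis : ∀ r : R, ∃! ab : A × A, r = (ab.1 : R) + x * (ab.2 : R)) :
    ∃ (u : R →+ SoergelBB R s) (c : SoergelBB R s →+ R),
      -- `u` is a map of `R`-bimodules
      (∀ r z : R, u (r * z) = inclTLeft R s r * u z) ∧
      (∀ r z : R, u (z * r) = u z * inclTRight R s r) ∧
      -- `c` is a map of `R`-bimodules
      (∀ (r : R) (t : SoergelBB R s), c (inclTLeft R s r * t) = r * c t) ∧
      (∀ (r : R) (t : SoergelBB R s), c (t * inclTRight R s r) = c t * r) ∧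
      -- the explicit formulas for `u` and `c`
      (u 1 = x ⊗ₜ[A] ((1 : R) ⊗ₜ[A] (1 : R)) + (1 : R) ⊗ₜ[A] ((1 : R) ⊗ₜ[A] x)) ∧
      (∀ (a b : A) (r r'' : R),
        c (r ⊗ₜ[A] ((((a : R) + x * (b : R))) ⊗ₜ[A] r'')) = r * (b : R) * r'') ∧
      -- zig-zag identity `(id_B ⊗ c) ∘ (u ⊗ id_B) = id_B`, on pure tensors of `B`
      (∀ r r' : R,
        (x ⊗ₜ[A] (1 : R)) * inclBRight R s (c ((1 : R) ⊗ₜ[A] (r ⊗ₜ[A] r')))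
          + inclBRight R s (c ((1 : R) ⊗ₜ[A] ((x * r) ⊗ₜ[A] r'))) = r ⊗ₜ[A] r') ∧
      -- zig-zag identity `(c ⊗ id_B) ∘ (id_B ⊗ u) = id_B`, on pure tensors of `B`
      (∀ r r' : R,
        inclBLeft R s (c (r ⊗ₜ[A] ((r' * x) ⊗ₜ[A] (1 : R))))
          + inclBLeft R s (c (r ⊗ₜ[A] (r' ⊗ₜ[A] (1 : R)))) * ((1 : R) ⊗ₜ[A] x)
          = r ⊗ₜ[A] r') := by
  classical
  have hxxA : x * x ∈ A := by
    show s (x*x) = RingHom.id R (x*x)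
    simp [map_mul, hx]
  set xx : A := ⟨x*x, hxxA⟩ with hxx
  choose f hf hu using hbasis
  set α : R → A := fun r => (f r).1 with hα
  set β : R → A := fun r => (f r).2 with hβ
  have hdec : ∀ r : R, r = ((α r : R)) + x * (β r : R) := hf
  have huniq : ∀ (r : R) (a b : A), r = (a:R) + x*(b:R) → α r = a ∧ β r = b := by
    intro r a b h
    have := hu r (a, b) h
    exact ⟨congrArg Prod.fst this.symm, congrArg Prod.snd this.symm⟩
  -- scalar moving lemmas
  have hmove : ∀ (a : A) (p q : R), ((a:R)*p) ⊗ₜ[A] q = p ⊗ₜ[A] ((a:R)*q) := by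
    intro a p q
    have := TensorProduct.smul_tmul (R := A) (M := R) (N := R) a p q
    rwa [Subring.smul_def, Subring.smul_def] at this
  have hmove3 : ∀ (a : A) (p q1 q2 : R),
      ((a:R)*p) ⊗ₜ[A] (q1 ⊗ₜ[A] q2) = p ⊗ₜ[A] (q1 ⊗ₜ[A] ((a:R)*q2)) := by
    intro a p q1 q2
    have h1 : (a • p) ⊗ₜ[A] (q1 ⊗ₜ[A] q2) = p ⊗ₜ[A] ((a • q1) ⊗ₜ[A] q2) := by
      rw [TensorProduct.smul_tmul, TensorProduct.smul_tmul']
    simp only [smul_eq_mul, Subring.smul_def] at h1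
    rw [h1, hmove]
  -- beta arithmetic
  have hβadd : ∀ r1 r2 : R, β (r1 + r2) = β r1 + β r2 := by
    intro r1 r2
    have e : r1 + r2 = (((α r1 : R)) + x*((β r1 : R))) + (((α r2 : R)) + x*((β r2 : R))) := by
      rw [← hdec r1, ← hdec r2]
    refine (huniq _ (α r1 + α r2) (β r1 + β r2) ?_).2
    push_cast
    rw [e]; ring
  have hαβsmul : ∀ (a : A) (r : R), α ((a:R)*r) = a * α r ∧ β ((a:R)*r) = a * β r := by
    intro a r
    refine huniq _ (a * α r) (a * β r) ?_
    push_cast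
    calc (a:R)*r = (a:R)*(((α r : R)) + x * (β r : R)) := by rw [← hdec r]
    _ = (a:R)*(α r:R) + x*((a:R)*(β r:R)) := by ring
  have hβx : ∀ r : R, β (x * r) = α r := by
    intro r
    refine (huniq _ (xx * β r) (α r) ?_).2
    push_cast [hxx]
    calc x*r = x*(((α r : R)) + x * (β r : R)) := by rw [← hdec r]
    _ = x*x*(β r:R) + x*(α r:R) := by ring
  -- the counit
  set c2 : R ⊗[A] R →ₗ[A] R := TensorProduct.lift (LinearMap.mk₂ A
      (fun r' r'' => ((β r' : R)) * r'')
      (by intro m n r''; rw [hβadd]; push_cast; ring)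
      (by intro a m r''; simp only [smul_eq_mul, Subring.smul_def]
          rw [(hαβsmul a m).2]; push_cast; ring)
      (by intro m r1 r2; ring)
      (by intro a m r; simp only [smul_eq_mul, Subring.smul_def]; ring)) with hc2
  have hc2t : ∀ r' r'' : R, c2 (r' ⊗ₜ r'') = ((β r' : R)) * r'' := by
    intro r' r''; simp [hc2]
  set cfull : SoergelBB R s →ₗ[A] R := TensorProduct.lift (LinearMap.mk₂ A
      (fun r m => r * c2 m)
      (by intro m n r''; ring)
      (by intro a m r''; simp only [smul_eq_mul, Subring.smul_def]; ring)
      (by intro m r1 r2; rw [map_add]; ring)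
      (by intro a m r; rw [map_smul]; simp only [smul_eq_mul, Subring.smul_def]
          ring)) with hcfull
  have hct : ∀ (r : R) (m : R ⊗[A] R), cfull (r ⊗ₜ m) = r * c2 m := by
    intro r m; simp [hcfull]
  -- the unit
  set u1 : SoergelBB R s := x ⊗ₜ[A] ((1:R) ⊗ₜ[A] (1:R)) + (1:R) ⊗ₜ[A] ((1:R) ⊗ₜ[A] x) with hu1
  have hkey : ∀ r : R, (r*x) ⊗ₜ[A] ((1:R) ⊗ₜ[A] (1:R)) + r ⊗ₜ[A] ((1:R) ⊗ₜ[A] x)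
      = x ⊗ₜ[A] ((1:R) ⊗ₜ[A] r) + (1:R) ⊗ₜ[A] ((1:R) ⊗ₜ[A] (r*x)) := by
    intro r
    have hr : r = ((α r : R)) + x*((β r : R)) := hdec r
    have hrx : r*x = ((α r : R))*x + x*x*((β r : R)) := by nth_rewrite 1 [hr]; ring
    have hrx' : r*x = ((α r : R))*x + x*((β r : R))*x := by nth_rewrite 1 [hr]; ring
    have l1 : (((α r : R))*x) ⊗ₜ[A] ((1:R) ⊗ₜ[A] (1:R))
        = x ⊗ₜ[A] ((1:R) ⊗ₜ[A] ((α r : R))) := by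
      rw [hmove3, mul_one]
    have l2 : (x*x*((β r : R))) ⊗ₜ[A] ((1:R) ⊗ₜ[A] (1:R))
        = (1:R) ⊗ₜ[A] ((1:R) ⊗ₜ[A] (x*x*((β r : R)))) := by
      have e : x*x*((β r : R)) = ((xx*(β r) : A):R) * 1 := by push_cast [hxx]; ring
      rw [e, hmove3, ← e]
    have l3 : ((α r : R)) ⊗ₜ[A] ((1:R) ⊗ₜ[A] x)
        = (1:R) ⊗ₜ[A] ((1:R) ⊗ₜ[A] (((α r : R))*x)) := by
      conv_lhs => rw [← mul_one ((α r : R))]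
      rw [hmove3]
    have l4 : (x*((β r : R))) ⊗ₜ[A] ((1:R) ⊗ₜ[A] x)
        = x ⊗ₜ[A] ((1:R) ⊗ₜ[A] (((β r : R))*x)) := by
      rw [mul_comm x ((β r : R)), hmove3]
    have hR1 : x ⊗ₜ[A] ((1:R) ⊗ₜ[A] r)
        = x ⊗ₜ[A] ((1:R) ⊗ₜ[A] ((α r : R))) + x ⊗ₜ[A] ((1:R) ⊗ₜ[A] (x*((β r : R)))) := by
      conv_lhs => rw [hr]
      rw [TensorProduct.tmul_add, TensorProduct.tmul_add]
    have hR2 : (1:R) ⊗ₜ[A] ((1:R) ⊗ₜ[A] (r*x))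
        = (1:R) ⊗ₜ[A] ((1:R) ⊗ₜ[A] (((α r : R))*x))
          + (1:R) ⊗ₜ[A] ((1:R) ⊗ₜ[A] (x*((β r : R))*x)) := by
      conv_lhs => rw [hrx']
      rw [TensorProduct.tmul_add, TensorProduct.tmul_add]
    have hL1 : (r*x) ⊗ₜ[A] ((1:R) ⊗ₜ[A] (1:R))
        = (((α r : R))*x) ⊗ₜ[A] ((1:R) ⊗ₜ[A] (1:R))
          + (x*x*((β r : R))) ⊗ₜ[A] ((1:R) ⊗ₜ[A] (1:R)) := by
      conv_lhs => rw [hrx]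
      rw [TensorProduct.add_tmul]
    have hL2 : r ⊗ₜ[A] ((1:R) ⊗ₜ[A] x)
        = ((α r : R)) ⊗ₜ[A] ((1:R) ⊗ₜ[A] x) + (x*((β r : R))) ⊗ₜ[A] ((1:R) ⊗ₜ[A] x) := by
      conv_lhs => rw [hr]
      rw [TensorProduct.add_tmul]
    rw [hL1, hL2, hR1, hR2, l1, l2, l3, l4]
    have e1 : ((β r : R))*x = x*((β r : R)) := mul_comm _ _
    have e2 : x*x*((β r : R)) = x*((β r : R))*x := by ring
    rw [e1, e2]
    abel
  have hBl : ∀ z : R, inclBLeft R s z = z ⊗ₜ[A] (1:R) := fun _ => rfl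
  have hBr : ∀ z : R, inclBRight R s z = (1:R) ⊗ₜ[A] z := fun _ => rfl
  have hTl : ∀ z : R, inclTLeft R s z = z ⊗ₜ[A] (1 : R ⊗[A] R) := fun _ => rfl
  have hTr : ∀ z : R, inclTRight R s z = (1:R) ⊗ₜ[A] ((1:R) ⊗ₜ[A] z) := fun _ => rfl
  have hone : (1 : R ⊗[A] R) = (1:R) ⊗ₜ[A] (1:R) := rfl
  have hTL : ∀ r : R, inclTLeft R s r * u1
      = (r*x) ⊗ₜ[A] ((1:R) ⊗ₜ[A] (1:R)) + r ⊗ₜ[A] ((1:R) ⊗ₜ[A] x) := by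
    intro r
    rw [hTl, hu1, mul_add, Algebra.TensorProduct.tmul_mul_tmul,
      Algebra.TensorProduct.tmul_mul_tmul]
    simp only [one_mul, mul_one]
  have hTR : ∀ r : R, inclTRight R s r * u1
      = x ⊗ₜ[A] ((1:R) ⊗ₜ[A] r) + (1:R) ⊗ₜ[A] ((1:R) ⊗ₜ[A] (r*x)) := by
    intro r
    rw [hTr, hu1, mul_add, Algebra.TensorProduct.tmul_mul_tmul,
      Algebra.TensorProduct.tmul_mul_tmul, Algebra.TensorProduct.tmul_mul_tmul,
      Algebra.TensorProduct.tmul_mul_tmul]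
    simp only [one_mul, mul_one]
  have hcentral : ∀ r : R, inclTLeft R s r * u1 = inclTRight R s r * u1 := by
    intro r; rw [hTL, hTR, hkey]
  refine ⟨{ toFun := fun r => inclTLeft R s r * u1,
            map_zero' := by show inclTLeft R s 0 * u1 = 0; rw [map_zero, zero_mul],
            map_add' := fun r z => by
              show inclTLeft R s (r+z) * u1 = inclTLeft R s r * u1 + inclTLeft R s z * u1
              rw [map_add, add_mul] },
          cfull.toAddMonoidHom, ?_, ?_, ?_, ?_, ?_, ?_, ?_, ?_⟩
  · intro r z
    show inclTLeft R s (r*z) * u1 = inclTLeft R s r * (inclTLeft R s z * u1)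
    rw [map_mul, mul_assoc]
  · intro r z
    show inclTLeft R s (z*r) * u1 = (inclTLeft R s z * u1) * inclTRight R s r
    rw [map_mul, mul_assoc, hcentral r]; ring
  · intro r t
    show cfull (inclTLeft R s r * t) = r * cfull t
    induction t using TensorProduct.induction_on with
    | zero => rw [mul_zero, map_zero, mul_zero]
    | tmul r1 m =>
        rw [hTl, Algebra.TensorProduct.tmul_mul_tmul, one_mul, hct, hct]; ring
    | add p q hp hq => rw [mul_add, map_add, hp, hq, map_add, mul_add]
  · have hc2R : ∀ (r : R) (m : R ⊗[A] R), c2 (m * ((1:R) ⊗ₜ[A] r)) = c2 m * r := by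
      intro r m
      induction m using TensorProduct.induction_on with
      | zero => rw [zero_mul, map_zero, zero_mul]
      | tmul r2 r3 =>
          rw [Algebra.TensorProduct.tmul_mul_tmul, mul_one, hc2t, hc2t]; ring
      | add p q hp hq => rw [add_mul, map_add, hp, hq, map_add, add_mul]
    intro r t
    show cfull (t * inclTRight R s r) = cfull t * r
    induction t using TensorProduct.induction_on with
    | zero => rw [zero_mul, map_zero, zero_mul]
    | tmul r1 m =>
        rw [hTr, Algebra.TensorProduct.tmul_mul_tmul, mul_one, hct, hct, hc2R]; ring
    | add p q hp hq => rw [add_mul, map_add, hp, hq, map_add, add_mul]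
  · show inclTLeft R s 1 * u1 = _
    rw [hTL 1, one_mul, hu1]
  · intro a b r r''
    show cfull (r ⊗ₜ[A] (((a:R) + x*(b:R)) ⊗ₜ[A] r'')) = r * (b:R) * r''
    rw [hct, hc2t, (huniq _ a b rfl).2]; ring
  · intro r r'
    show (x ⊗ₜ[A] (1:R)) * inclBRight R s (cfull ((1:R) ⊗ₜ[A] (r ⊗ₜ[A] r')))
        + inclBRight R s (cfull ((1:R) ⊗ₜ[A] ((x * r) ⊗ₜ[A] r'))) = r ⊗ₜ[A] r'
    rw [hct, hct, hc2t, hc2t, hβx r, one_mul, one_mul, hBr, hBr,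
      Algebra.TensorProduct.tmul_mul_tmul, mul_one, one_mul]
    have e1 : ((α r : R)) ⊗ₜ[A] r' = (1:R) ⊗ₜ[A] (((α r : R))*r') := by
      conv_lhs => rw [← mul_one ((α r : R))]
      rw [hmove]
    have e2 : (x*((β r : R))) ⊗ₜ[A] r' = x ⊗ₜ[A] (((β r : R))*r') := by
      rw [mul_comm x ((β r : R)), hmove]
    conv_rhs => rw [hdec r]
    rw [TensorProduct.add_tmul, e1, e2]
    abel
  · intro r r'
    show inclBLeft R s (cfull (r ⊗ₜ[A] ((r' * x) ⊗ₜ[A] (1:R))))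
        + inclBLeft R s (cfull (r ⊗ₜ[A] (r' ⊗ₜ[A] (1:R)))) * ((1:R) ⊗ₜ[A] x) = r ⊗ₜ[A] r'
    rw [hct, hct, hc2t, hc2t, mul_comm r' x, hβx r', mul_one, mul_one, hBl, hBl,
      Algebra.TensorProduct.tmul_mul_tmul, mul_one, one_mul]
    have e1 : (r*((α r' : R))) ⊗ₜ[A] (1:R) = r ⊗ₜ[A] ((α r' : R)) := by
      rw [mul_comm r ((α r' : R)), hmove, mul_one]
    have e2 : (r*((β r' : R))) ⊗ₜ[A] x = r ⊗ₜ[A] (((β r' : R))*x) := by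
      rw [mul_comm r ((β r' : R)), hmove]
    rw [e1, e2, ← TensorProduct.tmul_add]
    conv_rhs => rw [hdec r']
    rw [mul_comm ((β r' : R)) x]


end
end

section
/- Let R be a commutative ring, s a ring automorphism of R with s∘s = id, and A = R^s its fixed subring; assume there exists x ∈ R with s(x) = −x such that {1, x} is a basis of R as an A-module. For an R-module M let F(M) = M ⊗_A R, regarded as an R-module via the right tensor factor (M being an A-module by restriction). Then the endofunctor F of the category of R-modules is self-adjoint: there are isomorphisms Hom_R(F(M), N) ≅ Hom_R(M, F(N)) natural in the R-modules M and N. -/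
/-!
Let `R` be a commutative ring, `s` an involutive ring automorphism with fixed subring `A = R^s`,
and suppose `R = A ⊕ xA` for an element `x` with `s x = -x`.  For an `R`-module `M` let
`F(M) = M ⊗_A R`, regarded as an `R`-module via the right tensor factor (`M` being an `A`-module
by restriction).  Then the endofunctor `F` of the category of `R`-modules is self-adjoint:
there are isomorphisms `Hom_R(F(M), N) ≅ Hom_R(M, F(N))` natural in `M` and `N`.
-/

open scoped TensorProduct

noncomputable section

section FDef

variable (A : Type) [CommRing A] (R : Type) [CommRing R] [Algebra A R]
variable (M : Type) [AddCommGroup M] [Module A M]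

/-- The underlying abelian group of `F(M) = M ⊗_A R`. -/
def FObj : Type := TensorProduct A M R

instance : AddCommGroup (FObj A R M) :=
  inferInstanceAs (AddCommGroup (TensorProduct A M R))

instance : Module A (FObj A R M) :=
  inferInstanceAs (Module A (TensorProduct A M R))

/-- The `R`-action on `F(M) = M ⊗_A R` through the right tensor factor. -/
instance : SMul R (FObj A R M) :=
  ⟨fun r z =>
    (LinearMap.lTensor M (LinearMap.mulLeft A r) :
      TensorProduct A M R →ₗ[A] TensorProduct A M R) z⟩

/-- `F(M) = M ⊗_A R` is an `R`-module via the right tensor factor. -/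
instance : Module R (FObj A R M) :=
  Module.ofMinimalAxioms
    (fun r z w => map_add (LinearMap.lTensor M (LinearMap.mulLeft A r)) z w)
    (fun r r' z => by
      show LinearMap.lTensor M (LinearMap.mulLeft A (r + r')) z = _
      have h : LinearMap.mulLeft A (r + r') =
          LinearMap.mulLeft A r + LinearMap.mulLeft A r' := by
        ext t; simp [add_mul]
      rw [h, LinearMap.lTensor_add]; rfl)
    (fun r r' z => by
      show LinearMap.lTensor M (LinearMap.mulLeft A (r * r')) z = _
      have h : LinearMap.mulLeft A (r * r') =
          (LinearMap.mulLeft A r).comp (LinearMap.mulLeft A r') := by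
        ext t; simp [mul_assoc]
      rw [h, LinearMap.lTensor_comp]; rfl)
    (fun z => by
      show LinearMap.lTensor M (LinearMap.mulLeft A (1 : R)) z = z
      rw [LinearMap.mulLeft_one, LinearMap.lTensor_id]; rfl)

variable {A R}

/-- `F` on morphisms: `F(f) = f ⊗ id_R : M ⊗_A R → N ⊗_A R`. -/
def Fmap {M N : Type} [AddCommGroup M] [Module A M] [Module R M] [IsScalarTower A R M]
    [AddCommGroup N] [Module A N] [Module R N] [IsScalarTower A R N]
    (f : M →ₗ[R] N) : FObj A R M →ₗ[R] FObj A R N where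
  toFun z :=
    (LinearMap.rTensor R (f.restrictScalars A) :
      TensorProduct A M R →ₗ[A] TensorProduct A N R) z
  map_add' z w := map_add _ z w
  map_smul' r z := by
    show LinearMap.rTensor R (f.restrictScalars A)
        (LinearMap.lTensor M (LinearMap.mulLeft A r) z)
      = LinearMap.lTensor N (LinearMap.mulLeft A r)
        (LinearMap.rTensor R (f.restrictScalars A) z)
    exact LinearMap.congr_fun ((LinearMap.rTensor_comp_lTensor (f := f.restrictScalars A)
      (g := LinearMap.mulLeft A r)).trans (LinearMap.lTensor_comp_rTensor
      (f := f.restrictScalars A) (g := LinearMap.mulLeft A r)).symm) z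

end FDef

section Adj

variable {A : Type} [CommRing A] {R : Type} [CommRing R] [Algebra A R] {x : R}
variable (hb : ∀ r : R, ∃! ab : A × A,
      r = algebraMap A R ab.1 + x * algebraMap A R ab.2)

/-- first coordinate of `r` in the basis `{1, x}`. -/
def sa0 (r : R) : A := ((hb r).exists.choose).1
/-- second coordinate of `r` in the basis `{1, x}`. -/
def sa1 (r : R) : A := ((hb r).exists.choose).2

lemma sa_spec (r : R) :
    r = algebraMap A R (sa0 hb r) + x * algebraMap A R (sa1 hb r) :=
  (hb r).exists.choose_spec

lemma sa_unique {r : R} {a b : A}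
    (h : r = algebraMap A R a + x * algebraMap A R b) :
    sa0 hb r = a ∧ sa1 hb r = b := by
  have h2 : (sa0 hb r, sa1 hb r) = (a, b) :=
    (hb r).unique (y₁ := (sa0 hb r, sa1 hb r)) (y₂ := (a, b)) (sa_spec hb r) h
  exact ⟨congrArg Prod.fst h2, congrArg Prod.snd h2⟩

lemma sa1_one : sa1 hb (1 : R) = 0 :=
  (sa_unique hb (a := 1) (b := 0) (by simp)).2

lemma sa1_x : sa1 hb x = 1 :=
  (sa_unique hb (a := 0) (b := 1) (by simp)).2

lemma sa1_add (r r' : R) : sa1 hb (r + r') = sa1 hb r + sa1 hb r' := by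
  refine (sa_unique hb (a := sa0 hb r + sa0 hb r') ?_).2
  conv_lhs => rw [sa_spec hb r, sa_spec hb r']
  rw [map_add, map_add]; ring

lemma sa1_asmul (a : A) (r : R) : sa1 hb (a • r) = a * sa1 hb r := by
  refine (sa_unique hb (a := a * sa0 hb r) ?_).2
  rw [Algebra.smul_def]
  conv_lhs => rw [sa_spec hb r]
  rw [map_mul, map_mul]; ring

lemma sa1_xmul {c : A} (hx2 : x * x = algebraMap A R c) (r : R) :
    sa1 hb (x * r) = sa0 hb r := by
  refine (sa_unique hb (a := c * sa1 hb r) ?_).2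
  conv_lhs => rw [sa_spec hb r]
  rw [map_mul]
  calc x * (algebraMap A R (sa0 hb r) + x * algebraMap A R (sa1 hb r))
      = (x * x) * algebraMap A R (sa1 hb r) + x * algebraMap A R (sa0 hb r) := by ring
    _ = _ := by rw [hx2, ← map_mul]

section Mod

variable {M : Type} [AddCommGroup M] [Module A M]

/-- Identity map viewing `TensorProduct A M R` as `FObj A R M`. -/
def toF (z : TensorProduct A M R) : FObj A R M := z

lemma toF_add (z w : TensorProduct A M R) : toF (z + w) = toF z + toF w := rfl

lemma toF_zero : toF (0 : TensorProduct A M R) = (0 : FObj A R M) := rfl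

lemma smul_toF (r : R) (z : TensorProduct A M R) :
    r • toF z = toF ((LinearMap.lTensor M (LinearMap.mulLeft A r)) z) := rfl

lemma smul_toF_tmul (r t : R) (m : M) :
    r • toF (m ⊗ₜ[A] t) = toF (m ⊗ₜ[A] (r * t)) := by
  rw [smul_toF, LinearMap.lTensor_tmul]
  rfl

lemma asmul_toF (a : A) (z : TensorProduct A M R) :
    a • toF z = toF (a • z) := rfl

end Mod

section Maps

variable {M : Type} [AddCommGroup M] [Module A M] [Module R M] [IsScalarTower A R M]
variable {N : Type} [AddCommGroup N] [Module A N] [Module R N] [IsScalarTower A R N]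

lemma phi_tmul_mul (φ : FObj A R M →ₗ[R] N) (m : M) (r t : R) :
    φ (toF (m ⊗ₜ[A] (r * t))) = r • φ (toF (m ⊗ₜ[A] t)) := by
  rw [← smul_toF_tmul, map_smul]

lemma phi_tmul (φ : FObj A R M →ₗ[R] N) (m : M) (t : R) :
    φ (toF (m ⊗ₜ[A] t)) = t • φ (toF (m ⊗ₜ[A] (1 : R))) := by
  rw [← phi_tmul_mul, mul_one]

lemma asmul_tmul_one (a : A) (m : M) :
    ((algebraMap A R a • m) ⊗ₜ[A] (1 : R) : TensorProduct A M R)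
      = m ⊗ₜ[A] (algebraMap A R a) := by
  rw [algebraMap_smul, TensorProduct.smul_tmul, Algebra.smul_def, mul_one]

lemma algebraMap_smul_toF (a : A) (z : TensorProduct A M R) :
    (algebraMap A R a) • toF z = a • toF z := by
  induction z using TensorProduct.induction_on with
  | zero => rw [toF_zero, smul_zero, smul_zero]
  | tmul m t =>
      rw [smul_toF_tmul, asmul_toF, TensorProduct.smul_tmul', TensorProduct.smul_tmul,
        Algebra.smul_def]
  | add z w hz hw => rw [toF_add, smul_add, smul_add, hz, hw]

lemma asmul_tmul_toF (a : A) (m : M) (t : R) :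
    toF ((algebraMap A R a • m) ⊗ₜ[A] t) = algebraMap A R a • toF (m ⊗ₜ[A] t) := by
  rw [algebraMap_smul_toF, asmul_toF, TensorProduct.smul_tmul', algebraMap_smul]

variable (x) in
/-- The forward map of the adjunction, as a bare function. -/
def eFun (φ : FObj A R M →ₗ[R] N) (m : M) : FObj A R N :=
  toF (φ (toF ((x • m) ⊗ₜ[A] (1 : R))) ⊗ₜ[A] (1 : R))
    + toF (φ (toF (m ⊗ₜ[A] (1 : R))) ⊗ₜ[A] x)

lemma eFun_add (φ : FObj A R M →ₗ[R] N) (m m' : M) :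
    eFun x φ (m + m') = eFun x φ m + eFun x φ m' := by
  unfold eFun
  rw [smul_add,
    show (((x • m + x • m') ⊗ₜ[A] (1:R)) : TensorProduct A M R)
        = (x • m) ⊗ₜ[A] (1:R) + (x • m') ⊗ₜ[A] (1:R) from TensorProduct.add_tmul _ _ _,
    show (((m + m') ⊗ₜ[A] (1:R)) : TensorProduct A M R)
        = m ⊗ₜ[A] (1:R) + m' ⊗ₜ[A] (1:R) from TensorProduct.add_tmul _ _ _,
    toF_add, toF_add, map_add, map_add, TensorProduct.add_tmul, TensorProduct.add_tmul,
    toF_add, toF_add]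
  abel

lemma eFun_asmul (φ : FObj A R M →ₗ[R] N) (a : A) (m : M) :
    eFun x φ (algebraMap A R a • m) = algebraMap A R a • eFun x φ m := by
  unfold eFun
  rw [show x • (algebraMap A R a • m) = algebraMap A R a • (x • m) from smul_comm _ _ _,
    asmul_tmul_one a (x • m), asmul_tmul_one a m,
    phi_tmul φ (x • m) (algebraMap A R a), phi_tmul φ m (algebraMap A R a),
    asmul_tmul_toF, asmul_tmul_toF, smul_add]

lemma eFun_xsmul {c : A} (hx2 : x * x = algebraMap A R c)
    (φ : FObj A R M →ₗ[R] N) (m : M) :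
    eFun x φ (x • m) = x • eFun x φ m := by
  unfold eFun
  rw [show x • (x • m) = algebraMap A R c • m by rw [smul_smul, hx2],
    asmul_tmul_one c m, phi_tmul φ m (algebraMap A R c),
    show toF ((algebraMap A R c • φ (toF (m ⊗ₜ[A] (1:R)))) ⊗ₜ[A] (1:R))
        = toF (φ (toF (m ⊗ₜ[A] (1:R))) ⊗ₜ[A] (algebraMap A R c)) from
      congrArg toF (asmul_tmul_one c _),
    smul_add, smul_toF_tmul, smul_toF_tmul, mul_one, hx2]
  abel

include hb in
lemma eFun_smul {c : A} (hx2 : x * x = algebraMap A R c)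
    (φ : FObj A R M →ₗ[R] N) (r : R) (m : M) :
    eFun x φ (r • m) = r • eFun x φ m := by
  have hdec : ∀ (P : Type) [AddCommGroup P] [Module R P], ∀ p : P,
      r • p = algebraMap A R (sa0 hb r) • p + x • (algebraMap A R (sa1 hb r) • p) := by
    intro P _ _ p
    conv_lhs => rw [sa_spec hb r]
    rw [add_smul, mul_smul]
  rw [hdec M m, eFun_add, eFun_asmul, eFun_xsmul hx2, eFun_asmul,
    hdec (FObj A R N) (eFun x φ m)]

/-- The forward map of the adjunction. -/
def eFwd {c : A} (hx2 : x * x = algebraMap A R c)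
    (φ : FObj A R M →ₗ[R] N) : M →ₗ[R] FObj A R N where
  toFun := eFun x φ
  map_add' := eFun_add φ
  map_smul' r m := eFun_smul hb hx2 φ r m

/-- Projection `N ⊗ R → N` on the `x`-coordinate. -/
def piF : TensorProduct A N R →ₗ[A] N :=
  TensorProduct.lift (LinearMap.mk₂ A (fun (n : N) (r : R) => sa1 hb r • n)
    (fun n n' r => smul_add _ _ _)
    (fun a n r => smul_comm _ _ _)
    (fun n r r' => show sa1 hb (r + r') • n = sa1 hb r • n + sa1 hb r' • n by
      rw [sa1_add, add_smul])
    (fun a n r => show sa1 hb (a • r) • n = a • (sa1 hb r • n) by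
      rw [sa1_asmul, mul_smul]))

lemma piF_tmul (n : N) (r : R) : piF hb (n ⊗ₜ[A] r) = sa1 hb r • n := by
  simp [piF]

lemma piF_smul_toF (a : A) (z : TensorProduct A N R) :
    piF hb (algebraMap A R a • toF z) = a • piF hb z := by
  rw [algebraMap_smul_toF]
  exact map_smul (piF hb) a z

/-- The backward map of the adjunction, as an `A`-linear map. -/
def eBwdAux (θ : M →ₗ[R] FObj A R N) : TensorProduct A M R →ₗ[A] N :=
  TensorProduct.lift (LinearMap.mk₂ A (fun (m : M) (r : R) => r • piF hb (θ m))
    (fun m m' r => show r • piF hb (θ (m + m')) = r • piF hb (θ m) + r • piF hb (θ m') by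
      rw [map_add θ]
      exact (congrArg (r • ·) (map_add (piF hb) (θ m) (θ m'))).trans (smul_add _ _ _))
    (fun a m r => by
      show r • piF hb (θ (a • m)) = a • (r • piF hb (θ m))
      have h : piF hb (θ (a • m)) = a • piF hb (θ m) := by
        rw [← algebraMap_smul R a m, map_smul θ]
        exact piF_smul_toF hb a (θ m)
      rw [h]
      exact smul_comm r a _)
    (fun m r r' => show (r + r') • piF hb (θ m) = r • piF hb (θ m) + r' • piF hb (θ m) from
      add_smul _ _ _)
    (fun a m r => show (a • r) • piF hb (θ m) = a • (r • piF hb (θ m)) from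
      smul_assoc _ _ _))

lemma eBwdAux_tmul (θ : M →ₗ[R] FObj A R N) (m : M) (t : R) :
    eBwdAux hb θ (m ⊗ₜ[A] t) = t • piF hb (θ m) := by
  simp [eBwdAux]

lemma eBwdAux_smul (θ : M →ₗ[R] FObj A R N) (r : R) (z : TensorProduct A M R) :
    eBwdAux hb θ ((LinearMap.lTensor M (LinearMap.mulLeft A r)) z)
      = r • eBwdAux hb θ z := by
  induction z using TensorProduct.induction_on with
  | zero => rw [map_zero, map_zero, smul_zero]
  | tmul m t =>
      rw [LinearMap.lTensor_tmul, eBwdAux_tmul]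
      show (r * t) • piF hb (θ m) = r • eBwdAux hb θ (m ⊗ₜ[A] t)
      rw [eBwdAux_tmul, mul_smul]
  | add z w hz hw => rw [map_add, map_add, map_add, hz, hw, smul_add]

/-- The backward map of the adjunction. -/
def eBwd (θ : M →ₗ[R] FObj A R N) : FObj A R M →ₗ[R] N where
  toFun z := eBwdAux hb θ z
  map_add' z w := map_add _ z w
  map_smul' r z := eBwdAux_smul hb θ r z

lemma reconstruct {c : A} (hx2 : x * x = algebraMap A R c)
    (z : TensorProduct A N R) :
    toF (piF hb ((LinearMap.lTensor N (LinearMap.mulLeft A x)) z) ⊗ₜ[A] (1 : R))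
      + toF (piF hb z ⊗ₜ[A] x) = toF z := by
  induction z using TensorProduct.induction_on with
  | zero => simp [toF]; exact add_zero _
  | tmul n t =>
      rw [LinearMap.lTensor_tmul, piF_tmul, piF_tmul]
      show toF ((sa1 hb (x * t) • n) ⊗ₜ[A] (1:R)) + toF ((sa1 hb t • n) ⊗ₜ[A] x) = _
      rw [sa1_xmul hb hx2, TensorProduct.smul_tmul, TensorProduct.smul_tmul,
        Algebra.smul_def, Algebra.smul_def, mul_one, ← toF_add, ← TensorProduct.tmul_add]
      congr 1
      conv_rhs => rw [sa_spec hb t]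
      ring
  | add z w hz hw =>
      rw [map_add, map_add, map_add, TensorProduct.add_tmul, TensorProduct.add_tmul,
        toF_add, toF_add, toF_add, ← hz, ← hw]
      abel

lemma eBwd_eFwd {c : A} (hx2 : x * x = algebraMap A R c)
    (φ : FObj A R M →ₗ[R] N) : eBwd hb (eFwd hb hx2 φ) = φ := by
  apply LinearMap.ext
  intro z
  show eBwdAux hb (eFwd hb hx2 φ) z = φ (toF z)
  induction z using TensorProduct.induction_on with
  | zero => rw [map_zero, toF_zero, map_zero]
  | tmul m t =>
      rw [eBwdAux_tmul]
      have h1 : piF hb ((eFwd hb hx2 φ) m) = φ (toF (m ⊗ₜ[A] (1:R))) := by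
        show piF hb (eFun x φ m) = _
        unfold eFun
        refine (map_add (piF hb) _ _).trans ?_
        show piF hb (φ (toF ((x • m) ⊗ₜ[A] (1:R))) ⊗ₜ[A] (1:R))
            + piF hb (φ (toF (m ⊗ₜ[A] (1:R))) ⊗ₜ[A] x) = _
        rw [piF_tmul, piF_tmul, sa1_one, sa1_x, zero_smul, one_smul, zero_add]
      rw [h1, ← phi_tmul]
  | add z w hz hw =>
      rw [map_add, toF_add, map_add, hz, hw]

lemma eFwd_eBwd {c : A} (hx2 : x * x = algebraMap A R c)
    (θ : M →ₗ[R] FObj A R N) : eFwd hb hx2 (eBwd hb θ) = θ := by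
  apply LinearMap.ext
  intro m
  show eFun x (eBwd hb θ) m = θ m
  unfold eFun
  have h1 : (eBwd hb θ) (toF ((x • m) ⊗ₜ[A] (1:R))) = piF hb (θ (x • m)) := by
    show eBwdAux hb θ ((x • m) ⊗ₜ[A] (1:R)) = _
    rw [eBwdAux_tmul, one_smul]
  have h2 : (eBwd hb θ) (toF (m ⊗ₜ[A] (1:R))) = piF hb (θ m) := by
    show eBwdAux hb θ (m ⊗ₜ[A] (1:R)) = _
    rw [eBwdAux_tmul, one_smul]
  rw [h1, h2, map_smul θ]
  show toF (piF hb ((LinearMap.lTensor N (LinearMap.mulLeft A x)) (θ m)) ⊗ₜ[A] (1:R))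
      + toF (piF hb (θ m) ⊗ₜ[A] x) = θ m
  exact reconstruct hb hx2 (θ m)

/-- The adjunction equivalence. -/
def eEquiv {c : A} (hx2 : x * x = algebraMap A R c) :
    (FObj A R M →ₗ[R] N) ≃ (M →ₗ[R] FObj A R N) where
  toFun := eFwd hb hx2
  invFun := eBwd hb
  left_inv := eBwd_eFwd hb hx2
  right_inv := eFwd_eBwd hb hx2

lemma Fmap_tmul {M N : Type} [AddCommGroup M] [Module A M] [Module R M] [IsScalarTower A R M]
    [AddCommGroup N] [Module A N] [Module R N] [IsScalarTower A R N]
    (f : M →ₗ[R] N) (m : M) (t : R) :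
    Fmap f (toF (m ⊗ₜ[A] t)) = toF (f m ⊗ₜ[A] t) := by
  show LinearMap.rTensor R (f.restrictScalars A) (m ⊗ₜ[A] t) = (f m ⊗ₜ[A] t : TensorProduct A N R)
  rw [LinearMap.rTensor_tmul]
  rfl

end Maps

end Adj

/-- **Self-adjointness of `- ⊗_A R`.**  Let `A = R^s` be the fixed subring of an involutive
automorphism `s` of a commutative ring `R` (presented as an injective algebra map `A → R` with
image the fixed points of `s`), and assume `{1, x}` is an `A`-basis of `R` for some `x` with
`s x = -x`.  Then the endofunctor `F(M) = M ⊗_A R` of the category of `R`-modules (with `R`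
acting through the right tensor factor, `M` being an `A`-module by restriction) is
self-adjoint, naturally in both variables. -/
theorem tensor_fixedSubring_self_adjoint
    (R : Type) [CommRing R] (s : R →+* R) (hs : ∀ r : R, s (s r) = r)
    (A : Type) [CommRing A] [Algebra A R]
    (hinj : Function.Injective (algebraMap A R))
    (hrange : (algebraMap A R).range = RingHom.eqLocus s (RingHom.id R))
    (x : R) (hx : s x = -x)
    (hbasis : ∀ r : R, ∃! ab : A × A,
      r = algebraMap A R ab.1 + x * algebraMap A R ab.2) :
    ∃ e : ∀ (M : Type) [AddCommGroup M] [Module A M] [Module R M] [IsScalarTower A R M]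
        (N : Type) [AddCommGroup N] [Module A N] [Module R N] [IsScalarTower A R N],
        (FObj A R M →ₗ[R] N) ≃ (M →ₗ[R] FObj A R N),
      ∀ (M M' N N' : Type)
        [AddCommGroup M] [Module A M] [Module R M] [IsScalarTower A R M]
        [AddCommGroup M'] [Module A M'] [Module R M'] [IsScalarTower A R M']
        [AddCommGroup N] [Module A N] [Module R N] [IsScalarTower A R N]
        [AddCommGroup N'] [Module A N'] [Module R N'] [IsScalarTower A R N']
        (f : M' →ₗ[R] M) (g : N →ₗ[R] N')
        (φ : FObj A R M →ₗ[R] N),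
        e M' N' ((g.comp φ).comp (Fmap f)) = (Fmap g).comp ((e M N φ).comp f) := by
  classical
  -- `s` fixes the image of `A`
  have hfix : ∀ a : A, s (algebraMap A R a) = algebraMap A R a := by
    intro a
    have h : algebraMap A R a ∈ RingHom.eqLocus s (RingHom.id R) := by
      rw [← hrange]; exact ⟨a, rfl⟩
    exact h
  -- `x * x` lies in (the image of) `A`
  set d : A := sa1 hbasis (x * x) with hd
  set c : A := sa0 hbasis (x * x) with hc
  have h1 : x * x = algebraMap A R c + x * algebraMap A R d := sa_spec hbasis (x * x)
  have hsxx : s (x * x) = x * x := by rw [map_mul, hx]; ring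
  have h2 : x * x = algebraMap A R c + x * algebraMap A R (-d) := by
    conv_lhs => rw [← hsxx, h1]
    rw [map_add, map_mul, hfix, hfix, hx, map_neg]
    ring
  have hdd' : d = -d := (sa_unique hbasis (a := c) (b := -d) h2).2
  have hneg : algebraMap A R (-d) = algebraMap A R d := by rw [← hdd']
  have hyfix : s (x * algebraMap A R d) = x * algebraMap A R d := by
    rw [map_mul, hfix, hx]
    calc -x * algebraMap A R d = x * algebraMap A R (-d) := by rw [map_neg]; ring
      _ = x * algebraMap A R d := by rw [hneg]
  obtain ⟨a0, ha0⟩ : x * algebraMap A R d ∈ (algebraMap A R).range := by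
    rw [hrange]; exact hyfix
  have hy1 : sa1 hbasis (x * algebraMap A R d) = 0 :=
    (sa_unique hbasis (a := a0) (b := 0) (by rw [← ha0]; simp)).2
  have hy2 : sa1 hbasis (x * algebraMap A R d) = d :=
    (sa_unique hbasis (a := 0) (b := d) (by simp)).2
  have hd0 : d = 0 := by rw [← hy2, hy1]
  have hx2 : x * x = algebraMap A R c := by
    rw [h1, hd0, map_zero, mul_zero, add_zero]
  -- the adjunction
  refine ⟨fun M _ _ _ _ N _ _ _ _ => eEquiv hbasis hx2, ?_⟩
  intro M M' N N' _ _ _ _ _ _ _ _ _ _ _ _ _ _ _ _ f g φ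
  apply LinearMap.ext
  intro m
  show eFun x ((g.comp φ).comp (Fmap f)) m = Fmap g (eFun x φ (f m))
  unfold eFun
  rw [map_add (Fmap g), Fmap_tmul, Fmap_tmul]
  show toF (g (φ (Fmap f (toF ((x • m) ⊗ₜ[A] (1:R))))) ⊗ₜ[A] (1:R))
      + toF (g (φ (Fmap f (toF (m ⊗ₜ[A] (1:R))))) ⊗ₜ[A] x)
    = toF (g (φ (toF ((x • f m) ⊗ₜ[A] (1:R)))) ⊗ₜ[A] (1:R))
      + toF (g (φ (toF (f m ⊗ₜ[A] (1:R)))) ⊗ₜ[A] x)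
  rw [Fmap_tmul, Fmap_tmul, map_smul f]

end
end
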